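/- Let d ≡ 15 (mod 60) be square-free such that x² - d·y² = -6 is solvable in integers. Then there is no solution (x, y) of x² - d·y² = 1 in integers with x odd and y even that generates (as powers, up to sign) all solutions; more precisely, any fundamental solution (γ, δ) of x² - d·y² = 1 has γ even and δ odd. -/

import Mathlib

/-- `s = γ + δ√d` is a fundamental solution of `x² - d y² = 1`: `γ, δ` are positive,
`s` is a solution, and every integer solution `(x, y)` satisfies
`x + y√d = ± sⁿ` for some `n : ℤ` (where `s` is viewed as a unit of `ℤ√d`). -/
def IsFundamentalSolution (d γ δ : ℤ) : Prop :=
  0 < γ ∧ 0 < δ ∧ γ ^ 2 - d * δ ^ 2 = 1 ∧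
  ∃ u : (ℤ√d)ˣ, (u : ℤ√d) = ⟨γ, δ⟩ ∧
    ∀ x y : ℤ, x ^ 2 - d * y ^ 2 = 1 →
      ∃ n : ℤ, (⟨x, y⟩ : ℤ√d) = ((u ^ n : (ℤ√d)ˣ) : ℤ√d) ∨
        (⟨x, y⟩ : ℤ√d) = -((u ^ n : (ℤ√d)ˣ) : ℤ√d)

private lemma aux_mul {d : ℤ} {v w : ℤ√d}
    (hv : Odd v.re ∧ Even v.im) (hw : Odd w.re ∧ Even w.im) :
    Odd (v * w).re ∧ Even (v * w).im := by
  obtain ⟨hv1, hv2⟩ := hv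
  obtain ⟨hw1, hw2⟩ := hw
  constructor
  · rw [Zsqrtd.re_mul]
    exact (hv1.mul hw1).add_even ((hv2.mul_left d).mul_right w.im)
  · rw [Zsqrtd.im_mul]
    exact (hw2.mul_left v.re).add (hv2.mul_right w.re)

private lemma aux_pow {d : ℤ} {v : ℤ√d}
    (hv : Odd v.re ∧ Even v.im) (n : ℕ) :
    Odd (v ^ n).re ∧ Even (v ^ n).im := by
  induction n with
  | zero => simpa using ⟨odd_one, even_zero⟩
  | succ n ih => rw [pow_succ]; exact aux_mul ih hv

private lemma aux_zpow {d : ℤ} (u : (ℤ√d)ˣ)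
    (hv : Odd (u : ℤ√d).re ∧ Even (u : ℤ√d).im) (n : ℤ) :
    Odd ((u ^ n : (ℤ√d)ˣ) : ℤ√d).re ∧ Even ((u ^ n : (ℤ√d)ˣ) : ℤ√d).im := by
  have hinv : Odd ((u⁻¹ : (ℤ√d)ˣ) : ℤ√d).re ∧ Even ((u⁻¹ : (ℤ√d)ˣ) : ℤ√d).im := by
    have h : ((u : ℤ√d) * ((u⁻¹ : (ℤ√d)ˣ) : ℤ√d)) = 1 := by
      rw [← Units.val_mul, mul_inv_cancel, Units.val_one]
    set a := ((u⁻¹ : (ℤ√d)ˣ) : ℤ√d).re with ha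
    set b := ((u⁻¹ : (ℤ√d)ˣ) : ℤ√d).im with hb
    have hre := congrArg Zsqrtd.re h
    have him := congrArg Zsqrtd.im h
    rw [Zsqrtd.re_mul] at hre
    rw [Zsqrtd.im_mul] at him
    simp only [Zsqrtd.re_one, Zsqrtd.im_one] at hre him
    obtain ⟨k, hk⟩ := hv.1
    obtain ⟨m, hm⟩ := hv.2
    rw [hk, hm] at hre him
    constructor
    · exact ⟨-(k * a) - d * m * b, by linarith⟩
    · exact ⟨-(k * b) - m * a, by linarith⟩
  rcases n with m | m
  · have : ((u ^ (Int.ofNat m) : (ℤ√d)ˣ) : ℤ√d) = (u : ℤ√d) ^ m := by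
      rw [Int.ofNat_eq_coe, zpow_natCast, Units.val_pow_eq_pow_val]
    rw [this]; exact aux_pow hv m
  · have : ((u ^ (Int.negSucc m) : (ℤ√d)ˣ) : ℤ√d) = ((u⁻¹ : (ℤ√d)ˣ) : ℤ√d) ^ (m + 1) := by
      rw [zpow_negSucc, ← inv_pow, Units.val_pow_eq_pow_val]
    rw [this]; exact aux_pow hinv (m + 1)

theorem stmt_8 (d : ℤ) (hsf : Squarefree d) (hd : d % 60 = 15)
    (hsol : ∃ x y : ℤ, x ^ 2 - d * y ^ 2 = -6)
    (γ δ : ℤ) (hfund : IsFundamentalSolution d γ δ) :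
    Even γ ∧ Odd δ := by
  obtain ⟨hγp, hδp, hnorm, u, hu, hall⟩ := hfund
  obtain ⟨a, b, hab⟩ := hsol
  have hd2 : d % 2 = 1 := by omega
  have hdodd : ¬ Even d := by rw [Int.even_iff]; omega
  -- a and b are both odd
  have habpar : (Even a ↔ Even b) := by
    have he : Even (a ^ 2 - d * b ^ 2) := by rw [hab]; decide
    simp only [Int.even_sub, Int.even_mul, Int.even_pow] at he
    tauto
  have hanodd : Odd a := by
    rw [← Int.not_even_iff_odd]
    intro hae
    have hbe : Even b := habpar.mp hae
    obtain ⟨p, hp⟩ := hae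
    obtain ⟨q, hq⟩ := hbe
    rw [hp, hq] at hab
    have h3 : Even (3 : ℤ) := ⟨d * q ^ 2 - p ^ 2, by nlinarith⟩
    exact (by decide : ¬ Even (3 : ℤ)) h3
  have hbnodd : Odd b := by
    rw [← Int.not_even_iff_odd]
    intro hbe
    exact (Int.not_even_iff_odd.mpr hanodd) (habpar.mpr hbe)
  -- 3 divides a
  have hd3 : (3 : ℤ) ∣ d := by omega
  obtain ⟨e, he⟩ := hd3
  have h3a : (3 : ℤ) ∣ a := by
    have : (3 : ℤ) ∣ a ^ 2 := ⟨e * b ^ 2 - 2, by rw [he] at hab; linarith⟩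
    exact Int.prime_three.dvd_of_dvd_pow this
  obtain ⟨c, hc⟩ := h3a
  subst hc
  have hcodd : Odd c := by
    rcases Int.even_or_odd c with h | h
    · exact absurd (h.mul_left 3) (Int.not_even_iff_odd.mpr hanodd)
    · exact h
  -- the constructed solution
  have hsol1 : (3 * c ^ 2 + 1) ^ 2 - d * (c * b) ^ 2 = 1 := by
    linear_combination c ^ 2 * hab
  have hxeven : Even (3 * c ^ 2 + 1) := by
    obtain ⟨k, hk⟩ := hcodd
    exact ⟨6 * k ^ 2 + 6 * k + 2, by rw [hk]; ring⟩
  -- γ cannot be odd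
  have key : ¬ (Odd γ ∧ Even δ) := by
    rintro ⟨hγo, hδe⟩
    obtain ⟨n, hn⟩ := hall (3 * c ^ 2 + 1) (c * b) hsol1
    have hu_par : Odd (u : ℤ√d).re ∧ Even (u : ℤ√d).im := by
      rw [hu]; exact ⟨hγo, hδe⟩
    have hpow := aux_zpow u hu_par n
    rcases hn with h | h
    · have := congrArg Zsqrtd.re h
      simp only at this
      rw [this] at hxeven
      exact (Int.not_even_iff_odd.mpr hpow.1) hxeven
    · have := congrArg Zsqrtd.re h
      simp only [Zsqrtd.re_neg] at this
      rw [this] at hxeven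
      exact (Int.not_even_iff_odd.mpr hpow.1.neg) hxeven
  -- parity of the norm equation
  have hnpar : ¬ Even (γ ^ 2 - d * δ ^ 2) := by rw [hnorm]; decide
  simp only [Int.even_sub, Int.even_mul, Int.even_pow, ne_eq,
    OfNat.ofNat_ne_zero, not_false_eq_true, and_true] at hnpar
  have hnE1 : ¬ Even γ ↔ Odd γ := Int.not_even_iff_odd
  have hnE2 : ¬ Even δ ↔ Odd δ := Int.not_even_iff_odd
  tauto
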